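/- Let W : ℝ² → [0,∞) be C² with exactly one zero at 0 in a convex neighborhood on which W is convex, and with D²W(0) positive definite. There exist η, R₀, C, c > 0 such that for all R > R₀ and all u ∈ H¹([0,R],ℝ²) with u(0) = a and d(0,a) ≤ η, one has E(u,[0,R]) := ∫₀^R (½|u'|² + W(u)) dt ≥ d(0,a) − C e^{−cR}, where d is the degenerate distance associated to W. -/

import Mathlib

open Real MeasureTheory Filter Topology

/-- The degenerate geodesic distance associated to a nonnegative potential `W` on ℝ² ≅ ℂ. -/
noncomputable def degDist (W : ℂ → ℝ) (p q : ℂ) : ℝ :=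
  sInf {c | ∃ γ : ℝ → ℂ, ContDiff ℝ 1 γ ∧ γ 0 = p ∧ γ 1 = q ∧
    c = ∫ t in (0:ℝ)..1, Real.sqrt 2 * Real.sqrt (W (γ t)) * ‖deriv γ t‖}

set_option maxHeartbeats 1000000

lemma hasDerivAt_norm_sq {γ : ℝ → ℂ} {v : ℂ} {s : ℝ} (h : HasDerivAt γ v s) :
    HasDerivAt (fun t => ‖γ t‖^2) (2 * ((γ s).re * v.re + (γ s).im * v.im)) s := by
  have hre : HasDerivAt (fun t => (γ t).re) v.re s :=
    (Complex.reCLM.hasFDerivAt.comp_hasDerivAt s h)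
  have him : HasDerivAt (fun t => (γ t).im) v.im s :=
    (Complex.imCLM.hasFDerivAt.comp_hasDerivAt s h)
  have h2 := (hre.mul hre).add (him.mul him)
  have heq : (fun t => ‖γ t‖^2) = fun t => (γ t).re * (γ t).re + (γ t).im * (γ t).im := by
    funext t
    rw [Complex.sq_norm, Complex.normSq_apply]
  rw [heq]
  refine h2.congr_deriv ?_
  ring

lemma real_inner_le (z w : ℂ) : z.re * w.re + z.im * w.im ≤ ‖z‖ * ‖w‖ := by
  have hz : ‖z‖^2 = z.re^2 + z.im^2 := by
    rw [Complex.sq_norm, Complex.normSq_apply]; ring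
  have hw : ‖w‖^2 = w.re^2 + w.im^2 := by
    rw [Complex.sq_norm, Complex.normSq_apply]; ring
  nlinarith [sq_nonneg (z.re * w.im - z.im * w.re), norm_nonneg z, norm_nonneg w,
    mul_nonneg (norm_nonneg z) (norm_nonneg w),
    sq_nonneg (z.re * w.re + z.im * w.im - ‖z‖ * ‖w‖), sq_nonneg (‖z‖ - ‖w‖)]

lemma amgm_sqrt {x wv : ℝ} (hx : 0 ≤ x) (hwv : 0 ≤ wv) :
    Real.sqrt 2 * Real.sqrt wv * x ≤ 1/2 * x^2 + wv := by
  have h1 : Real.sqrt 2 * Real.sqrt wv = Real.sqrt (2 * wv) := (Real.sqrt_mul (by norm_num) wv).symm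
  have h2 : Real.sqrt (2*wv) ^ 2 = 2 * wv := Real.sq_sqrt (by linarith)
  nlinarith [sq_nonneg (x - Real.sqrt (2*wv)), Real.sqrt_nonneg (2*wv)]

lemma sqrt_quad_lower {W : ℂ → ℝ} {m : ℝ} (hm : 0 < m) {z : ℂ} (h : m * ‖z‖^2 ≤ W z) :
    Real.sqrt (2*m) * ‖z‖ ≤ Real.sqrt 2 * Real.sqrt (W z) := by
  have h1 : Real.sqrt (2*m) * ‖z‖ = Real.sqrt 2 * Real.sqrt (m * ‖z‖^2) := by
    rw [Real.sqrt_mul (by norm_num : (0:ℝ) ≤ 2), Real.sqrt_mul hm.le,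
      Real.sqrt_sq (norm_nonneg z)]
    ring
  rw [h1]
  have := Real.sqrt_le_sqrt h
  nlinarith [Real.sqrt_nonneg 2]

lemma sqrt_quad_upper {W : ℂ → ℝ} {M : ℝ} (hM : 0 < M) {z : ℂ} (hWz : 0 ≤ W z)
    (h : W z ≤ M * ‖z‖^2) :
    Real.sqrt 2 * Real.sqrt (W z) ≤ Real.sqrt (2*M) * ‖z‖ := by
  have h1 : Real.sqrt (2*M) * ‖z‖ = Real.sqrt 2 * Real.sqrt (M * ‖z‖^2) := by
    rw [Real.sqrt_mul (by norm_num : (0:ℝ) ≤ 2), Real.sqrt_mul hM.le,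
      Real.sqrt_sq (norm_nonneg z)]
    ring
  rw [h1]
  have := Real.sqrt_le_sqrt h
  nlinarith [Real.sqrt_nonneg 2]

lemma degDist_set_nonneg (W : ℂ → ℝ) (hW : ∀ q, 0 ≤ W q) (p q : ℂ) :
    ∀ c ∈ {c | ∃ γ : ℝ → ℂ, ContDiff ℝ 1 γ ∧ γ 0 = p ∧ γ 1 = q ∧
      c = ∫ t in (0:ℝ)..1, Real.sqrt 2 * Real.sqrt (W (γ t)) * ‖deriv γ t‖}, 0 ≤ c := by
  rintro c ⟨γ, hγ, h0, h1, rfl⟩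
  apply intervalIntegral.integral_nonneg (by norm_num)
  intro t _
  positivity

lemma degDist_le (W : ℂ → ℝ) (hW : ∀ q, 0 ≤ W q) (p q : ℂ) (γ : ℝ → ℂ)
    (hγ : ContDiff ℝ 1 γ) (h0 : γ 0 = p) (h1 : γ 1 = q) :
    degDist W p q ≤ ∫ t in (0:ℝ)..1, Real.sqrt 2 * Real.sqrt (W (γ t)) * ‖deriv γ t‖ :=
  csInf_le ⟨0, degDist_set_nonneg W hW p q⟩ ⟨γ, hγ, h0, h1, rfl⟩

lemma le_degDist (W : ℂ → ℝ) (p q : ℂ) (b : ℝ)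
    (hb : ∀ γ : ℝ → ℂ, ContDiff ℝ 1 γ → γ 0 = p → γ 1 = q →
      b ≤ ∫ t in (0:ℝ)..1, Real.sqrt 2 * Real.sqrt (W (γ t)) * ‖deriv γ t‖) :
    b ≤ degDist W p q := by
  apply le_csInf
  · exact ⟨_, fun s : ℝ => p + s • (q - p), contDiff_const.add (contDiff_id.smul contDiff_const),
      by simp, by simp, rfl⟩
  · rintro c ⟨γ, hγ, h0, h1, rfl⟩
    exact hb γ hγ h0 h1

lemma degDist_nonneg (W : ℂ → ℝ) (hW : ∀ q, 0 ≤ W q) (p q : ℂ) : 0 ≤ degDist W p q :=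
  le_csInf ⟨_, fun s : ℝ => p + s • (q - p), contDiff_const.add (contDiff_id.smul contDiff_const),
      by simp, by simp, rfl⟩ (degDist_set_nonneg W hW p q)

lemma path_cost_lower (W : ℂ → ℝ) (hW : ∀ q, 0 ≤ W q) (hWc : Continuous W) {r m : ℝ} (hrpos : 0 < r) (hm : 0 < m)
    (hlow : ∀ q : ℂ, ‖q‖ ≤ r → m * ‖q‖^2 ≤ W q) (q : ℂ) :
    Real.sqrt (2*m) / 2 * (min ‖q‖ r)^2 ≤ degDist W 0 q := by
  apply le_degDist
  intro γ hγ h0 h1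
  set ρ : ℝ := min ‖q‖ r with hρdef
  have hρnn : 0 ≤ ρ := le_min (norm_nonneg q) hrpos.le
  have hγc : Continuous γ := hγ.continuous
  have hγd : ∀ s, HasDerivAt γ (deriv γ s) s := fun s =>
    ((hγ.differentiable one_ne_zero) s).hasDerivAt
  have hdc : Continuous (deriv γ) := hγ.continuous_deriv le_rfl
  have hintc : Continuous fun t => Real.sqrt 2 * Real.sqrt (W (γ t)) * ‖deriv γ t‖ :=
    ((continuous_const.mul ((hWc.comp hγc).sqrt)).mul hdc.norm)
  rcases eq_or_lt_of_le hρnn with heq | hρpos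
  · rw [← heq]
    simpa using intervalIntegral.integral_nonneg (by norm_num : (0:ℝ) ≤ 1)
      (fun t _ => by positivity)
  set S : Set ℝ := Set.Icc 0 1 ∩ {s | ρ ≤ ‖γ s‖} with hSdef
  have hSne : S.Nonempty := ⟨1, ⟨by norm_num, by rw [Set.mem_setOf_eq, h1]; exact min_le_left _ _⟩⟩
  have hSclosed : IsClosed S := isClosed_Icc.inter (isClosed_le continuous_const hγc.norm)
  have hSbdd : BddBelow S := ⟨0, fun s hs => hs.1.1⟩
  set t₁ : ℝ := sInf S with ht₁def
  have ht₁mem : t₁ ∈ S := hSclosed.csInf_mem hSne hSbdd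
  have ht₁Icc : t₁ ∈ Set.Icc (0:ℝ) 1 := ht₁mem.1
  have ht₁ρ : ρ ≤ ‖γ t₁‖ := ht₁mem.2
  have ht₁pos : 0 < t₁ := by
    rcases eq_or_lt_of_le ht₁Icc.1 with h | h
    · exfalso
      have : ρ ≤ ‖γ 0‖ := by rw [h]; exact ht₁ρ
      rw [h0] at this
      simp at this
      linarith
    · exact h
  have hlt : ∀ s, 0 ≤ s → s < t₁ → ‖γ s‖ < ρ := by
    intro s hs0 hst
    by_contra hcon
    push_neg at hcon
    have : s ∈ S := ⟨⟨hs0, le_trans hst.le ht₁Icc.2⟩, hcon⟩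
    exact absurd (csInf_le hSbdd this) (not_le.mpr hst)
  have ht₁le : ‖γ t₁‖ ≤ ρ := by
    have htend : Tendsto (fun s => ‖γ s‖) (nhdsWithin t₁ (Set.Iio t₁)) (nhds ‖γ t₁‖) :=
      (hγc.norm.continuousAt).continuousWithinAt.tendsto
    apply le_of_tendsto htend
    filter_upwards [Ioo_mem_nhdsLT ht₁pos] with s hs
    exact (hlt s hs.1.le hs.2).le
  have hballs : ∀ s ∈ Set.Icc 0 t₁, ‖γ s‖ ≤ ρ := by
    intro s hs
    rcases eq_or_lt_of_le hs.2 with h | h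
    · rw [h]; exact ht₁le
    · exact (hlt s hs.1 h).le
  -- FTC for the squared norm
  set φ' : ℝ → ℝ := fun s =>
    2 * ((γ s).re * (deriv γ s).re + (γ s).im * (deriv γ s).im) with hφ'def
  have hφ'c : Continuous φ' := by
    apply continuous_const.mul
    exact ((Complex.continuous_re.comp hγc).mul (Complex.continuous_re.comp hdc)).add
      ((Complex.continuous_im.comp hγc).mul (Complex.continuous_im.comp hdc))
  have hFTC : (∫ s in (0:ℝ)..t₁, φ' s) = ‖γ t₁‖^2 - ‖γ 0‖^2 :=
    intervalIntegral.integral_eq_sub_of_hasDerivAt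
      (fun s _ => hasDerivAt_norm_sq (hγd s)) (hφ'c.intervalIntegrable 0 t₁)
  have hpoint : ∀ s ∈ Set.Icc 0 t₁,
      Real.sqrt (2*m) / 2 * φ' s ≤ Real.sqrt 2 * Real.sqrt (W (γ s)) * ‖deriv γ s‖ := by
    intro s hs
    have h2 : ‖γ s‖ ≤ r := le_trans (hballs s hs) (min_le_right _ _)
    have h3 := sqrt_quad_lower hm (hlow (γ s) h2)
    have h4 := real_inner_le (γ s) (deriv γ s)
    have h5 : Real.sqrt (2*m) / 2 * φ' s ≤ Real.sqrt (2*m) * (‖γ s‖ * ‖deriv γ s‖) := by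
      rw [hφ'def]
      have h6 : Real.sqrt (2*m) / 2 * (2 * ((γ s).re * (deriv γ s).re + (γ s).im * (deriv γ s).im))
          = Real.sqrt (2*m) * ((γ s).re * (deriv γ s).re + (γ s).im * (deriv γ s).im) := by ring
      rw [h6]
      exact mul_le_mul_of_nonneg_left h4 (Real.sqrt_nonneg _)
    calc Real.sqrt (2*m) / 2 * φ' s ≤ Real.sqrt (2*m) * (‖γ s‖ * ‖deriv γ s‖) := h5
      _ = (Real.sqrt (2*m) * ‖γ s‖) * ‖deriv γ s‖ := by ring
      _ ≤ (Real.sqrt 2 * Real.sqrt (W (γ s))) * ‖deriv γ s‖ :=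
          mul_le_mul_of_nonneg_right h3 (norm_nonneg _)
  have hmono : (∫ s in (0:ℝ)..t₁, Real.sqrt (2*m) / 2 * φ' s)
      ≤ ∫ s in (0:ℝ)..t₁, Real.sqrt 2 * Real.sqrt (W (γ s)) * ‖deriv γ s‖ :=
    intervalIntegral.integral_mono_on ht₁Icc.1
      ((continuous_const.mul hφ'c).intervalIntegrable 0 t₁)
      (hintc.intervalIntegrable 0 t₁) hpoint
  have hsplit : (∫ t in (0:ℝ)..t₁, Real.sqrt 2 * Real.sqrt (W (γ t)) * ‖deriv γ t‖)
      ≤ ∫ t in (0:ℝ)..1, Real.sqrt 2 * Real.sqrt (W (γ t)) * ‖deriv γ t‖ := by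
    rw [← intervalIntegral.integral_add_adjacent_intervals
      (hintc.intervalIntegrable 0 t₁) (hintc.intervalIntegrable t₁ 1)]
    have : 0 ≤ ∫ t in t₁..1, Real.sqrt 2 * Real.sqrt (W (γ t)) * ‖deriv γ t‖ :=
      intervalIntegral.integral_nonneg ht₁Icc.2 (fun t _ => by positivity)
    linarith
  have hval : ρ ≤ ‖γ t₁‖ := ht₁ρ
  have hcomp : Real.sqrt (2*m) / 2 * ρ^2 ≤ ∫ s in (0:ℝ)..t₁, Real.sqrt (2*m) / 2 * φ' s := by
    rw [intervalIntegral.integral_const_mul, hFTC, h0]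
    have hteq : ‖γ t₁‖ = ρ := le_antisymm ht₁le ht₁ρ
    rw [hteq]
    simp
  linarith

noncomputable def Pfun (x : ℝ) : ℝ := 3*x^2 - 2*x^3
noncomputable def Pder (x : ℝ) : ℝ := 6*(x - x^2)

lemma hasDerivAt_Pfun (x : ℝ) : HasDerivAt Pfun (Pder x) x := by
  have h := ((hasDerivAt_pow 2 x).const_mul 3).sub ((hasDerivAt_pow 3 x).const_mul 2)
  have : Pfun = fun x : ℝ => 3*x^2 - 2*x^3 := rfl
  rw [this]
  refine h.congr_deriv ?_
  simp only [Pder]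
  norm_num
  ring

lemma Pfun_zero : Pfun 0 = 0 := by simp [Pfun]
lemma Pfun_one : Pfun 1 = 1 := by norm_num [Pfun]
lemma Pder_zero : Pder 0 = 0 := by simp [Pder]
lemma Pder_one : Pder 1 = 0 := by norm_num [Pder]
lemma Pfun_mem {x : ℝ} (h : x ∈ Set.Icc (0:ℝ) 1) : Pfun x ∈ Set.Icc (0:ℝ) 1 := by
  obtain ⟨h0, h1⟩ := h
  constructor
  · simp only [Pfun]; nlinarith
  · simp only [Pfun]; nlinarith [sq_nonneg (1-x)]
lemma Pder_nonneg {x : ℝ} (h : x ∈ Set.Icc (0:ℝ) 1) : 0 ≤ Pder x := by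
  obtain ⟨h0, h1⟩ := h
  simp only [Pder]; nlinarith
lemma continuous_Pfun : Continuous Pfun := by
  have : Pfun = fun x : ℝ => 3*x^2 - 2*x^3 := rfl
  rw [this]; continuity
lemma continuous_Pder : Continuous Pder := by
  have : Pder = fun x : ℝ => 6*(x - x^2) := rfl
  rw [this]; continuity

lemma concat_bound (W : ℂ → ℝ) (hW : ∀ q, 0 ≤ W q) (hWc : Continuous W)
    {r M : ℝ} (hrpos : 0 < r) (hM : 0 < M)
    (hupp : ∀ q : ℂ, ‖q‖ ≤ r → W q ≤ M * ‖q‖^2)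
    (u : ℝ → ℂ) (hu : ContDiff ℝ 1 u) (t : ℝ) (ht : 0 ≤ t)
    (hstay : ∀ τ ∈ Set.Icc 0 t, ‖u τ‖ ≤ r) :
    degDist W 0 (u 0) ≤ (∫ τ in (0:ℝ)..t, Real.sqrt 2 * Real.sqrt (W (u τ)) * ‖deriv u τ‖)
      + Real.sqrt (M/2) * ‖u t‖^2 := by
  set b : ℂ := u t with hbdef
  have hud : ∀ x, HasDerivAt u (deriv u x) x := fun x => ((hu.differentiable one_ne_zero) x).hasDerivAt
  have hudc : Continuous (deriv u) := hu.continuous_deriv le_rfl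
  -- the concatenated path
  set γ : ℝ → ℂ := fun s => if s ≤ 1/2 then (Pfun (2*s)) • b else u (t*(1 - Pfun (2*s-1))) with hγdef
  set D : ℝ → ℂ := fun s => if s ≤ 1/2 then (2 * Pder (2*s)) • b
    else (t * (-(2 * Pder (2*s-1)))) • deriv u (t*(1 - Pfun (2*s-1))) with hDdef
  set φ₂ : ℝ → ℝ := fun s => t*(1 - Pfun (2*s-1)) with hφ₂def
  have hφ₂d : ∀ s, HasDerivAt φ₂ (t * (-(2 * Pder (2*s-1)))) s := by
    intro s
    have h1 : HasDerivAt (fun s : ℝ => 2*s - 1) 2 s := by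
      simpa using ((hasDerivAt_id s).const_mul 2).sub_const 1
    have h2 : HasDerivAt (fun s : ℝ => Pfun (2*s-1)) (Pder (2*s-1) * 2) s :=
      by have := (hasDerivAt_Pfun (2*s-1)).comp s h1; exact this
    have h3 := (h2.const_sub 1).const_mul t
    refine h3.congr_deriv ?_
    ring
  have hg1d : ∀ s, HasDerivAt (fun s : ℝ => (Pfun (2*s)) • b) ((2 * Pder (2*s)) • b) s := by
    intro s
    have h1 : HasDerivAt (fun s : ℝ => Pfun (2*s)) (Pder (2*s) * 2) s :=
      (hasDerivAt_Pfun (2*s)).comp s (by simpa using (hasDerivAt_id s).const_mul 2)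
    have := h1.smul_const b
    refine this.congr_deriv ?_
    rw [mul_comm]
  have hg2d : ∀ s, HasDerivAt (fun s => u (φ₂ s)) ((t * (-(2 * Pder (2*s-1)))) • deriv u (φ₂ s)) s := by
    intro s
    exact (hud (φ₂ s)).scomp s (hφ₂d s)
  -- γ has derivative D everywhere
  have hγD : ∀ s, HasDerivAt γ (D s) s := by
    intro s
    rcases lt_trichotomy s (1/2) with hs | hs | hs
    · have he : γ =ᶠ[nhds s] fun s => (Pfun (2*s)) • b := by
        filter_upwards [Iio_mem_nhds hs] with x hx
        simp only [hγdef, if_pos (le_of_lt (Set.mem_Iio.mp hx))]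
      rw [show D s = (2 * Pder (2*s)) • b from if_pos hs.le]
      exact (hg1d s).congr_of_eventuallyEq he
    · -- the junction point
      subst hs
      have hval : γ (1/2) = b := by
        simp only [hγdef, if_pos le_rfl]
        norm_num [Pfun_one]
      have hD0 : D (1/2) = 0 := by
        simp only [hDdef, if_pos le_rfl]
        norm_num [Pder_one]
      rw [hD0]
      have hleft : HasDerivWithinAt γ 0 (Set.Iic (1/2)) (1/2) := by
        have h1 := (hg1d (1/2)).hasDerivWithinAt (s := Set.Iic (1/2))
        have h2 : ((2 : ℝ) * Pder (2*(1/2))) • b = 0 := by norm_num [Pder_one]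
        rw [h2] at h1
        apply h1.congr
        · intro x hx
          simp only [hγdef, if_pos (Set.mem_Iic.mp hx)]
        · rw [hval]
          norm_num [Pfun_one]
      have hright : HasDerivWithinAt γ 0 (Set.Ici (1/2)) (1/2) := by
        have h1 := (hg2d (1/2)).hasDerivWithinAt (s := Set.Ici (1/2))
        have h2 : ((t : ℝ) * (-(2 * Pder (2*(1/2)-1)))) • deriv u (φ₂ (1/2)) = 0 := by
          norm_num [Pder_zero]
        rw [h2] at h1
        apply h1.congr
        · intro x hx
          rcases eq_or_lt_of_le (Set.mem_Ici.mp hx) with h | h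
          · rw [← h, hval]
            simp only [hφ₂def]
            norm_num [Pfun_zero]
            exact hbdef
          · simp only [hγdef, if_neg (not_le.mpr h), hφ₂def]
        · rw [hval]
          simp only [hφ₂def]
          norm_num [Pfun_zero]
          exact hbdef
      have := hleft.union hright
      rw [Set.Iic_union_Ici] at this
      exact this.hasDerivAt (by simp)
    · have he : γ =ᶠ[nhds s] fun s => u (φ₂ s) := by
        filter_upwards [Ioi_mem_nhds hs] with x hx
        simp only [hγdef, if_neg (not_le.mpr (Set.mem_Ioi.mp hx)), hφ₂def]
      rw [show D s = (t * (-(2 * Pder (2*s-1)))) • deriv u (φ₂ s) from if_neg (not_le.mpr hs)]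
      exact (hg2d s).congr_of_eventuallyEq he
  have hDc : Continuous D := by
    apply Continuous.if_le
    · exact (continuous_const.mul (continuous_Pder.comp (continuous_const.mul continuous_id))).smul
        continuous_const
    · apply Continuous.smul (f := fun x => t * -(2 * Pder (2 * x - 1)))
        (g := fun x => deriv u (t * (1 - Pfun (2 * x - 1))))
      · apply continuous_const.mul
        apply Continuous.neg
        apply continuous_const.mul
        exact continuous_Pder.comp (by continuity)
      · exact hudc.comp (continuous_const.mul (continuous_const.sub (continuous_Pfun.comp (by continuity))) : Continuous φ₂)
    · exact continuous_id
    · exact continuous_const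
    · intro x hx
      subst hx
      norm_num [Pder_one, Pder_zero]
  have hγCD : ContDiff ℝ 1 γ := by
    rw [contDiff_one_iff_deriv]
    constructor
    · exact fun s => (hγD s).differentiableAt
    · have : deriv γ = D := funext fun s => (hγD s).deriv
      rw [this]; exact hDc
  have hderivγ : deriv γ = D := funext fun s => (hγD s).deriv
  have hγ0 : γ 0 = 0 := by
    simp only [hγdef]
    norm_num [Pfun_zero]
  have hγ1 : γ 1 = u 0 := by
    simp only [hγdef]
    norm_num [Pfun_one]
  have hbr : ‖b‖ ≤ r := hstay t ⟨ht, le_rfl⟩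
  have hγc : Continuous γ := hγCD.continuous
  have hintc : Continuous fun s => Real.sqrt 2 * Real.sqrt (W (γ s)) * ‖D s‖ :=
    (continuous_const.mul ((hWc.comp hγc).sqrt)).mul hDc.norm
  have hle := degDist_le W hW 0 (u 0) γ hγCD hγ0 hγ1
  rw [hderivγ] at hle
  apply le_trans hle
  rw [← intervalIntegral.integral_add_adjacent_intervals
    (hintc.intervalIntegrable 0 (1/2)) (hintc.intervalIntegrable (1/2) 1)]
  set g : ℝ → ℝ := fun x => Real.sqrt 2 * Real.sqrt (W (x • b)) * ‖b‖ with hgdef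
  have hgc : Continuous g :=
    (continuous_const.mul ((hWc.comp (continuous_id.smul continuous_const)).sqrt)).mul
      continuous_const
  set g₂ : ℝ → ℝ := fun τ => Real.sqrt 2 * Real.sqrt (W (u τ)) * ‖deriv u τ‖ with hg₂def
  have hg₂c : Continuous g₂ :=
    (continuous_const.mul ((hWc.comp hu.continuous).sqrt)).mul hudc.norm
  -- first piece
  have hI1 : (∫ s in (0:ℝ)..(1/2), Real.sqrt 2 * Real.sqrt (W (γ s)) * ‖D s‖)
      = ∫ x in (0:ℝ)..1, g x := by
    have heq : (∫ s in (0:ℝ)..(1/2), Real.sqrt 2 * Real.sqrt (W (γ s)) * ‖D s‖)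
        = ∫ s in (0:ℝ)..(1/2), (fun s => 2 * Pder (2*s)) s • (g ∘ fun s => Pfun (2*s)) s := by
      apply intervalIntegral.integral_congr
      intro s hs
      rw [Set.uIcc_of_le (by norm_num : (0:ℝ) ≤ 1/2)] at hs
      have hsle : s ≤ 1/2 := hs.2
      have h2s : (2*s) ∈ Set.Icc (0:ℝ) 1 := ⟨by linarith [hs.1], by linarith⟩
      simp only [hγdef, hDdef, if_pos hsle, Function.comp]
      rw [norm_smul, Real.norm_eq_abs,
        abs_of_nonneg (mul_nonneg (by norm_num) (Pder_nonneg h2s))]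
      simp only [hgdef, smul_eq_mul]
      ring
    rw [heq]
    have hcomp := intervalIntegral.integral_comp_smul_deriv
      (f := fun s => Pfun (2*s)) (f' := fun s => 2 * Pder (2*s)) (g := g)
      (a := 0) (b := 1/2)
      (fun x _ => by
        have h1 : HasDerivAt (fun s : ℝ => Pfun (2*s)) (Pder (2*x) * 2) x :=
          (hasDerivAt_Pfun (2*x)).comp x (by simpa using (hasDerivAt_id x).const_mul 2)
        convert h1 using 1
        ring)
      ((continuous_const.mul (continuous_Pder.comp (continuous_const.mul continuous_id))).continuousOn)
      hgc
    rw [hcomp]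
    norm_num [Pfun_zero, Pfun_one]
  have hI1bound : (∫ x in (0:ℝ)..1, g x) ≤ Real.sqrt (M/2) * ‖b‖^2 := by
    have hpt : ∀ x ∈ Set.Icc (0:ℝ) 1, g x ≤ (Real.sqrt (2*M) * ‖b‖^2) * x := by
      intro x hx
      have hxb : ‖x • b‖ ≤ r := by
        rw [norm_smul, Real.norm_eq_abs, abs_of_nonneg hx.1]
        calc x * ‖b‖ ≤ 1 * ‖b‖ := mul_le_mul_of_nonneg_right hx.2 (norm_nonneg b)
          _ = ‖b‖ := one_mul _
          _ ≤ r := hbr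
      have h1 := sqrt_quad_upper hM (hW (x • b)) (hupp (x • b) hxb)
      have h2 : ‖x • b‖ = x * ‖b‖ := by
        rw [norm_smul, Real.norm_eq_abs, abs_of_nonneg hx.1]
      rw [h2] at h1
      have h3 := mul_le_mul_of_nonneg_right h1 (norm_nonneg b)
      calc g x = Real.sqrt 2 * Real.sqrt (W (x • b)) * ‖b‖ := rfl
        _ ≤ Real.sqrt (2*M) * (x * ‖b‖) * ‖b‖ := h3
        _ = (Real.sqrt (2*M) * ‖b‖^2) * x := by ring
    have hmono := intervalIntegral.integral_mono_on (μ := volume) (by norm_num : (0:ℝ) ≤ 1)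
      (hgc.intervalIntegrable 0 1)
      ((continuous_const.mul continuous_id').intervalIntegrable 0 1) hpt
    have hval : (∫ x in (0:ℝ)..1, (Real.sqrt (2*M) * ‖b‖^2) * x) = Real.sqrt (2*M) * ‖b‖^2 / 2 := by
      rw [intervalIntegral.integral_const_mul, integral_id]
      ring
    have hsq : Real.sqrt (2*M) = 2 * Real.sqrt (M/2) := by
      rw [show (2*M : ℝ) = 4*(M/2) by ring, Real.sqrt_mul (by norm_num : (0:ℝ) ≤ 4),
        show Real.sqrt 4 = 2 by
          rw [show (4:ℝ) = 2^2 by norm_num, Real.sqrt_sq (by norm_num : (0:ℝ) ≤ 2)]]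
    replace hmono : (∫ x in (0:ℝ)..1, g x) ≤ ∫ x in (0:ℝ)..1, (Real.sqrt (2*M) * ‖b‖^2) * x := hmono
    rw [hval, hsq] at hmono
    calc (∫ x in (0:ℝ)..1, g x) ≤ 2 * Real.sqrt (M/2) * ‖b‖^2 / 2 := hmono
      _ = Real.sqrt (M/2) * ‖b‖^2 := by ring
  -- second piece
  have hI2 : (∫ s in (1/2:ℝ)..1, Real.sqrt 2 * Real.sqrt (W (γ s)) * ‖D s‖)
      = ∫ τ in (0:ℝ)..t, g₂ τ := by
    have heq : (∫ s in (1/2:ℝ)..1, Real.sqrt 2 * Real.sqrt (W (γ s)) * ‖D s‖)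
        = ∫ s in (1/2:ℝ)..1, -((fun s => t * (-(2 * Pder (2*s-1)))) s • (g₂ ∘ φ₂) s) := by
      apply intervalIntegral.integral_congr
      intro s hs
      rw [Set.uIcc_of_le (by norm_num : (1/2:ℝ) ≤ 1)] at hs
      have h2s : (2*s-1) ∈ Set.Icc (0:ℝ) 1 := ⟨by linarith [hs.1], by linarith [hs.2]⟩
      have hsign : 0 ≤ t * (2 * Pder (2*s-1)) :=
        mul_nonneg ht (mul_nonneg (by norm_num) (Pder_nonneg h2s))
      have hγs : γ s = u (φ₂ s) := by
        rcases eq_or_lt_of_le hs.1 with h | h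
        · rw [← h]
          simp only [hγdef, if_pos le_rfl, hφ₂def]
          norm_num [Pfun_one, Pfun_zero]
          exact hbdef
        · simp only [hγdef, if_neg (not_le.mpr h), hφ₂def]
      have hDs : D s = (t * (-(2 * Pder (2*s-1)))) • deriv u (φ₂ s) := by
        rcases eq_or_lt_of_le hs.1 with h | h
        · rw [← h]
          simp only [hDdef, if_pos le_rfl, hφ₂def]
          norm_num [Pder_one, Pder_zero]
        · simp only [hDdef, if_neg (not_le.mpr h), hφ₂def]
      simp only [Function.comp]
      rw [hγs, hDs, norm_smul, Real.norm_eq_abs]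
      rw [show (t * (-(2 * Pder (2*s-1)))) = -(t * (2 * Pder (2*s-1))) by ring,
        abs_neg, abs_of_nonneg hsign]
      simp only [hg₂def, smul_eq_mul]
      ring
    rw [heq, intervalIntegral.integral_neg]
    have hcomp := intervalIntegral.integral_comp_smul_deriv
      (f := φ₂) (f' := fun s => t * (-(2 * Pder (2*s-1)))) (g := g₂)
      (a := 1/2) (b := 1)
      (fun x _ => hφ₂d x)
      (by
        apply Continuous.continuousOn
        exact continuous_const.mul
          ((continuous_const.mul (continuous_Pder.comp (by continuity))).neg))
      hg₂c
    rw [hcomp]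
    have hφhalf : φ₂ (1/2) = t := by simp only [hφ₂def]; norm_num [Pfun_zero]
    have hφone : φ₂ 1 = 0 := by simp only [hφ₂def]; norm_num [Pfun_one]
    rw [hφhalf, hφone, intervalIntegral.integral_symm]
    simp
  rw [hI1, hI2]
  linarith [hI1bound]


lemma exists_quad_bounds (W : ℂ → ℝ) (hWreg : ContDiff ℝ 2 W)
    (hW : ∀ q, 0 ≤ W q) (hW0 : W 0 = 0)
    (hHess : ∀ v : ℂ, v ≠ 0 → 0 < iteratedFDeriv ℝ 2 W 0 ![v, v]) :
    ∃ r > (0:ℝ), ∃ m > (0:ℝ), ∃ M > (0:ℝ), m ≤ M ∧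
      ∀ q : ℂ, ‖q‖ ≤ r → m * ‖q‖^2 ≤ W q ∧ W q ≤ M * ‖q‖^2 := by
  set H : ℂ → ContinuousMultilinearMap ℝ (fun _ : Fin 2 => ℂ) ℝ :=
    fun x => iteratedFDeriv ℝ 2 W x with hH
  have hHcont : Continuous H := hWreg.continuous_iteratedFDeriv le_rfl
  -- minimum of the Hessian quadratic form on the unit sphere
  obtain ⟨v₀, hv₀, hmin⟩ : ∃ v₀ ∈ Metric.sphere (0:ℂ) 1,
      ∀ v ∈ Metric.sphere (0:ℂ) 1, H 0 ![v₀, v₀] ≤ H 0 ![v, v] := by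
    have hc : ContinuousOn (fun v : ℂ => H 0 ![v, v]) (Metric.sphere 0 1) := by
      apply Continuous.continuousOn
      have h2 : Continuous fun v : ℂ => (![v, v] : Fin 2 → ℂ) := by
        apply continuous_pi; intro i; fin_cases i <;> exact continuous_id
      exact (H 0).cont.comp h2
    obtain ⟨v₀, hv₀, hm⟩ := (isCompact_sphere (0:ℂ) 1).exists_isMinOn ⟨1, by simp⟩ hc
    exact ⟨v₀, hv₀, fun v hv => hm hv⟩
  set μ : ℝ := H 0 ![v₀, v₀] with hμdef
  have hμpos : 0 < μ := hHess v₀ (by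
    intro h; rw [h] at hv₀; simp at hv₀)
  -- quadratic lower bound for the Hessian at 0
  have hquad0 : ∀ v : ℂ, μ * ‖v‖^2 ≤ H 0 ![v, v] := by
    intro v
    rcases eq_or_ne v 0 with rfl | hv
    · have h0 : (![(0:ℂ), 0] : Fin 2 → ℂ) = 0 := by funext i; fin_cases i <;> rfl
      simp [h0]
    · have hvn : (0:ℝ) < ‖v‖ := norm_pos_iff.mpr hv
      set w : ℂ := ‖v‖⁻¹ • v with hw
      have hwsph : w ∈ Metric.sphere (0:ℂ) 1 := by
        simp only [hw, mem_sphere_iff_norm, sub_zero, norm_smul, norm_inv, norm_norm]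
        exact inv_mul_cancel₀ hvn.ne'
      have hsc : H 0 ![v, v] = (‖v‖ * ‖v‖) * H 0 ![w, w] := by
        have : (![v, v] : Fin 2 → ℂ) = fun i => ‖v‖ • (![w, w] i) := by
          funext i
          fin_cases i <;> · show v = ‖v‖ • (‖v‖⁻¹ • v); rw [smul_smul, mul_inv_cancel₀ hvn.ne', one_smul]
        rw [this]
        rw [(H 0).map_smul_univ (fun _ : Fin 2 => ‖v‖) ![w, w]]
        rw [smul_eq_mul, Fin.prod_univ_two]
      rw [hsc]
      have := hmin w hwsph
      nlinarith [sq_nonneg ‖v‖]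
  -- choose r so that the Hessian varies by at most μ/2 on the ball
  obtain ⟨r, hrpos, hr⟩ : ∃ r > (0:ℝ), ∀ x : ℂ, ‖x‖ ≤ r → ‖H x - H 0‖ ≤ μ / 2 := by
    have := hHcont.continuousAt (x := (0:ℂ))
    rw [Metric.continuousAt_iff] at this
    obtain ⟨δ, hδpos, hδ⟩ := this (μ/2) (by linarith)
    refine ⟨δ/2, by linarith, fun x hx => ?_⟩
    have : dist (H x) (H 0) < μ/2 := hδ (by
      rw [dist_zero_right]; linarith)
    rw [dist_eq_norm] at this; linarith
  -- bounds for the Hessian quadratic form on the ball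
  have hlow : ∀ x : ℂ, ‖x‖ ≤ r → ∀ v : ℂ, μ/2 * ‖v‖^2 ≤ H x ![v, v] := by
    intro x hx v
    have h1 : ‖(H x - H 0) ![v, v]‖ ≤ ‖H x - H 0‖ * (‖v‖ * ‖v‖) := by
      have := (H x - H 0).le_opNorm ![v, v]
      simpa [Fin.prod_univ_two] using this
    have h2 : |H x ![v, v] - H 0 ![v, v]| ≤ μ/2 * (‖v‖ * ‖v‖) := by
      have h3 : (H x - H 0) ![v, v] = H x ![v, v] - H 0 ![v, v] := rfl
      rw [h3] at h1
      calc |H x ![v, v] - H 0 ![v, v]| ≤ ‖H x - H 0‖ * (‖v‖ * ‖v‖) := h1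
        _ ≤ μ/2 * (‖v‖ * ‖v‖) := by
            apply mul_le_mul_of_nonneg_right (hr x hx) (by positivity)
    have h4 := hquad0 v
    have h5 := abs_le.mp h2
    nlinarith [sq_nonneg ‖v‖]
  have hK : ∀ x : ℂ, ‖x‖ ≤ r → ∀ v : ℂ, H x ![v, v] ≤ (‖H 0‖ + μ/2) * ‖v‖^2 := by
    intro x hx v
    have h1 : ‖H x ![v, v]‖ ≤ ‖H x‖ * (‖v‖ * ‖v‖) := by
      have := (H x).le_opNorm ![v, v]
      simpa [Fin.prod_univ_two] using this
    have h2 : ‖H x‖ ≤ ‖H 0‖ + μ/2 := by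
      have := norm_sub_norm_le (H x) (H 0)
      have := hr x hx
      linarith
    have h3 := le_abs_self (H x ![v, v])
    have h4 : |H x ![v, v]| = ‖H x ![v, v]‖ := rfl
    nlinarith [norm_nonneg (H x ![v, v]), sq_nonneg ‖v‖, norm_nonneg (H x), mul_nonneg (norm_nonneg v) (norm_nonneg v)]
  -- the gradient vanishes at the minimum 0
  have hgrad0 : fderiv ℝ W 0 = 0 := by
    apply IsLocalMin.fderiv_eq_zero
    apply Filter.Eventually.of_forall
    intro x; rw [hW0]; exact hW x
  -- Taylor formula with integral remainder along rays
  have hW1 : ContDiff ℝ 1 W := hWreg.of_le one_le_two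
  have hfd : ContDiff ℝ 1 (fderiv ℝ W) := hWreg.fderiv_right (by norm_num)
  have htaylor : ∀ q : ℂ, W q = ∫ s in (0:ℝ)..1, (1 - s) * H (s • q) ![q, q] := by
    intro q
    have hL : ∀ s : ℝ, HasDerivAt (fun s : ℝ => s • q) q s := by
      intro s
      simpa using (hasDerivAt_id s).smul_const q
    have hg : ∀ s : ℝ, HasDerivAt (fun s : ℝ => W (s • q)) (fderiv ℝ W (s • q) q) s := by
      intro s
      exact ((hW1.differentiable one_ne_zero (s • q)).hasFDerivAt).comp_hasDerivAt s (hL s)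
    set G : ℝ → ℝ := fun s => fderiv ℝ W (s • q) q with hGdef
    have hG : ∀ s : ℝ, HasDerivAt G (fderiv ℝ (fderiv ℝ W) (s • q) q q) s := by
      intro s
      have hD : HasDerivAt (fun s : ℝ => fderiv ℝ W (s • q)) (fderiv ℝ (fderiv ℝ W) (s • q) q) s :=
        ((hfd.differentiable one_ne_zero (s • q)).hasFDerivAt).comp_hasDerivAt s (hL s)
      exact ((ContinuousLinearMap.apply ℝ ℝ q).hasFDerivAt).comp_hasDerivAt s hD
    set F : ℝ → ℝ := fun s => W (s • q) + (1 - s) * G s with hFdef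
    have hQeq : ∀ x : ℂ, H x ![q, q] = fderiv ℝ (fderiv ℝ W) x q q := by
      intro x
      rw [hH]
      rw [iteratedFDeriv_two_apply]
      rfl
    have hF : ∀ s : ℝ, HasDerivAt F ((1 - s) * H (s • q) ![q, q]) s := by
      intro s
      have h1 : HasDerivAt (fun s : ℝ => (1 : ℝ) - s) (-1) s := by
        simpa using ((hasDerivAt_id s).const_sub 1)
      have := (hg s).add (h1.mul (hG s))
      refine this.congr_deriv ?_
      rw [hQeq]
      ring
    have hcont : Continuous fun s : ℝ => (1 - s) * H (s • q) ![q, q] := by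
      have h2 : Continuous fun s : ℝ => H (s • q) ![q, q] :=
        ContinuousEval.continuous_eval.comp
          ((hHcont.comp (continuous_id.smul continuous_const)).prodMk continuous_const)
      exact (continuous_const.sub continuous_id).mul h2
    have := intervalIntegral.integral_eq_sub_of_hasDerivAt
      (f := F) (f' := fun s => (1 - s) * H (s • q) ![q, q])
      (fun t _ => hF t) (hcont.intervalIntegrable 0 1)
    rw [this]
    have hG0 : G 0 = 0 := by
      rw [hGdef]
      simp [hgrad0]
    simp [hFdef, hG0, hW0]
  -- final bounds
  have hcont2 : ∀ q : ℂ, Continuous fun s : ℝ => (1 - s) * H (s • q) ![q, q] := by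
    intro q
    have h2 : Continuous fun s : ℝ => H (s • q) ![q, q] :=
      ContinuousEval.continuous_eval.comp
        ((hHcont.comp (continuous_id.smul continuous_const)).prodMk continuous_const)
    exact (continuous_const.sub continuous_id).mul h2
  have hhalf : ∀ c : ℝ, (∫ s in (0:ℝ)..1, (1 - s) * c) = c / 2 := by
    intro c
    have hF : ∀ s : ℝ, HasDerivAt (fun s : ℝ => c * s - c * s^2 / 2) ((1 - s) * c) s := by
      intro s
      have h1 : HasDerivAt (fun s : ℝ => c * s) c s := by
        simpa using (hasDerivAt_id s).const_mul c
      have h2 : HasDerivAt (fun s : ℝ => c * s^2 / 2) (c * (2 * s) / 2) s := by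
        exact (((hasDerivAt_pow 2 s).const_mul c).div_const 2).congr_deriv (by ring_nf)
      have := h1.sub h2
      refine this.congr_deriv ?_
      ring
    rw [intervalIntegral.integral_eq_sub_of_hasDerivAt (fun t _ => hF t)
      (((continuous_const.sub continuous_id).mul continuous_const).intervalIntegrable 0 1)]
    ring
  refine ⟨r, hrpos, μ/4, by linarith, (‖H 0‖ + μ/2)/2, by positivity, ?_, ?_⟩
  · have : μ ≤ ‖H 0‖ * (1 * 1) := by
      calc μ = H 0 ![v₀, v₀] := hμdef
        _ ≤ ‖H 0 ![v₀, v₀]‖ := le_abs_self _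
        _ ≤ ‖H 0‖ * (1 * 1) := by
            have h5 := (H 0).le_opNorm ![v₀, v₀]
            have hv : ‖v₀‖ = 1 := by simpa using hv₀
            rw [Fin.prod_univ_two] at h5
            have e0 : ‖(![v₀, v₀] : Fin 2 → ℂ) 0‖ = 1 := by rw [Matrix.cons_val_zero, hv]
            have e1 : ‖(![v₀, v₀] : Fin 2 → ℂ) 1‖ = 1 := by
              rw [Matrix.cons_val_one, Matrix.cons_val_zero, hv]
            rw [e0, e1] at h5
            exact h5
    have hn := norm_nonneg (H 0)
    nlinarith
  · intro q hq
    have hmem : ∀ s : ℝ, s ∈ Set.Icc (0:ℝ) 1 → ‖s • q‖ ≤ r := by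
      intro s hs
      rw [norm_smul, Real.norm_eq_abs, abs_of_nonneg hs.1]
      calc s * ‖q‖ ≤ 1 * ‖q‖ := mul_le_mul_of_nonneg_right hs.2 (norm_nonneg q)
        _ = ‖q‖ := one_mul _
        _ ≤ r := hq
    have hint : IntervalIntegrable (fun s : ℝ => (1 - s) * H (s • q) ![q, q]) volume 0 1 :=
      (hcont2 q).intervalIntegrable 0 1
    constructor
    · rw [htaylor q]
      have h1 : (∫ s in (0:ℝ)..1, (1 - s) * (μ/2 * ‖q‖^2))
          ≤ ∫ s in (0:ℝ)..1, (1 - s) * H (s • q) ![q, q] := by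
        apply intervalIntegral.integral_mono_on (by norm_num)
          (((continuous_const.sub continuous_id).mul continuous_const).intervalIntegrable 0 1) hint
        intro s hs
        have h1s : (0:ℝ) ≤ 1 - s := by linarith [hs.2]
        exact mul_le_mul_of_nonneg_left (hlow (s • q) (hmem s hs) q) h1s
      rw [hhalf (μ/2 * ‖q‖^2)] at h1
      linarith [h1]
    · rw [htaylor q]
      have h1 : (∫ s in (0:ℝ)..1, (1 - s) * H (s • q) ![q, q])
          ≤ ∫ s in (0:ℝ)..1, (1 - s) * ((‖H 0‖ + μ/2) * ‖q‖^2) := by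
        apply intervalIntegral.integral_mono_on (by norm_num) hint
          (((continuous_const.sub continuous_id).mul continuous_const).intervalIntegrable 0 1)
        intro s hs
        have h1s : (0:ℝ) ≤ 1 - s := by linarith [hs.2]
        exact mul_le_mul_of_nonneg_left (hK (s • q) (hmem s hs) q) h1s
      rw [hhalf ((‖H 0‖ + μ/2) * ‖q‖^2)] at h1
      linarith [h1]


/-- The one-dimensional Allen–Cahn energy of `u` on `[a,b]`. -/
noncomputable def oneDEnergy (W : ℂ → ℝ) (u : ℝ → ℂ) (a b : ℝ) : ℝ :=
  ∫ t in a..b, ((1 / 2) * ‖deriv u t‖ ^ 2 + W (u t))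

/-- Lemma 3.1 ("lem20"): a curve starting at geodesic distance `d(0,a) ≤ η` from a
nondegenerate well `0` pays at least `d(0,a) - C e^{-cR}` on an interval of length `R`. -/
theorem energy_lower_bound_near_well (W : ℂ → ℝ) (hWreg : ContDiff ℝ 2 W)
    (hW : ∀ q, 0 ≤ W q) (hW0 : W 0 = 0)
    (B : Set ℂ) (hB : B ∈ nhds (0:ℂ)) (hBconv : Convex ℝ B)
    (hconv : ConvexOn ℝ B W) (hzero : ∀ q ∈ B, W q = 0 → q = 0)
    (hHess : ∀ v : ℂ, v ≠ 0 → 0 < iteratedFDeriv ℝ 2 W 0 ![v, v]) :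
    ∃ η > (0:ℝ), ∃ R₀ > (0:ℝ), ∃ C > (0:ℝ), ∃ c > (0:ℝ),
      ∀ R > R₀, ∀ u : ℝ → ℂ, ContDiff ℝ 1 u →
        ∀ a : ℂ, u 0 = a → degDist W 0 a ≤ η →
          degDist W 0 a - C * Real.exp (-c * R) ≤ oneDEnergy W u 0 R := by
  obtain ⟨r, hrpos, m, hm, M, hM, hmM, hbounds⟩ := exists_quad_bounds W hWreg hW hW0 hHess
  have hWc : Continuous W := hWreg.continuous
  have hlowW : ∀ q : ℂ, ‖q‖ ≤ r → m * ‖q‖^2 ≤ W q := fun q hq => (hbounds q hq).1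
  have huppW : ∀ q : ℂ, ‖q‖ ≤ r → W q ≤ M * ‖q‖^2 := fun q hq => (hbounds q hq).2
  set km : ℝ := Real.sqrt (2*m) with hkmdef
  have hkm : 0 < km := Real.sqrt_pos.mpr (by linarith)
  set ν : ℝ := Real.sqrt (M/2) with hνdef
  have hν : 0 < ν := Real.sqrt_pos.mpr (by linarith)
  set β : ℝ := m / ν with hβdef
  have hβ : 0 < β := by positivity
  set η : ℝ := km * r^2 / 8 with hηdef
  have hη : 0 < η := by positivity
  refine ⟨η, hη, 1, one_pos, η, hη, β, hβ, ?_⟩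
  intro R hR u hu a hua hda
  subst hua
  have hRpos : (0:ℝ) < R := lt_trans one_pos hR
  set ρ0 : ℝ := degDist W 0 (u 0) with hρ0def
  have hρ0nn : 0 ≤ ρ0 := degDist_nonneg W hW 0 (u 0)
  have hCexp : 0 < η * Real.exp (-β * R) := by positivity
  -- the starting point is well inside the ball
  have ha2 : ‖u 0‖^2 ≤ r^2/4 := by
    have hL1 := path_cost_lower W hW hWc hrpos hm hlowW (u 0)
    have h1 : km / 2 * (min ‖u 0‖ r)^2 ≤ η := le_trans hL1 hda
    have h2 : (min ‖u 0‖ r)^2 ≤ r^2/4 := by nlinarith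
    rcases le_total ‖u 0‖ r with h | h
    · rwa [min_eq_left h] at h2
    · exfalso
      rw [min_eq_right h] at h2
      nlinarith
  -- the pointwise energy density
  set e : ℝ → ℝ := fun τ => (1/2) * ‖deriv u τ‖^2 + W (u τ) with hedef
  have hudc : Continuous (deriv u) := hu.continuous_deriv le_rfl
  have hec : Continuous e := (continuous_const.mul (hudc.norm.pow 2)).add (hWc.comp hu.continuous)
  have henn : ∀ τ, 0 ≤ e τ := fun τ => by
    have := hW (u τ); positivity
  set g₂ : ℝ → ℝ := fun τ => Real.sqrt 2 * Real.sqrt (W (u τ)) * ‖deriv u τ‖ with hg₂def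
  have hg₂c : Continuous g₂ :=
    (continuous_const.mul ((hWc.comp hu.continuous).sqrt)).mul hudc.norm
  have hg₂nn : ∀ τ, 0 ≤ g₂ τ := fun τ => by
    have := Real.sqrt_nonneg (W (u τ)); positivity
  have hge : ∀ τ, g₂ τ ≤ e τ := fun τ => amgm_sqrt (norm_nonneg _) (hW (u τ))
  have hEdef : oneDEnergy W u 0 R = ∫ τ in (0:ℝ)..R, e τ := rfl
  have hgoal : ρ0 - η * Real.exp (-β * R) ≤ oneDEnergy W u 0 R → ρ0 - η * Real.exp (-β * R) ≤ oneDEnergy W u 0 R := id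
  -- it suffices to bound the energy from below by η, or by ρ0 - η e^{-βR}
  by_cases hstay : ∀ τ ∈ Set.Icc (0:ℝ) R, ‖u τ‖ ≤ r
  · -- the curve stays in the good ball: Gronwall argument
    set c : ℝ → ℝ := fun τ => ∫ s in (0:ℝ)..τ, g₂ s with hcdef
    have hcd : ∀ τ, HasDerivAt c (g₂ τ) τ := fun τ => (hg₂c.integral_hasStrictDerivAt 0 τ).hasDerivAt
    have hcc : Continuous c := by
      have : Differentiable ℝ c := fun τ => (hcd τ).differentiableAt
      exact this.continuous
    set ρ : ℝ → ℝ := fun τ => ρ0 - c τ with hρdef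
    have hρc : Continuous ρ := continuous_const.sub hcc
    have hkey : ∀ τ ∈ Set.Icc (0:ℝ) R, ρ0 ≤ c τ + ν * ‖u τ‖^2 := by
      intro τ hτ
      exact concat_bound W hW hWc hrpos hM huppW u hu τ hτ.1
        (fun s hs => hstay s ⟨hs.1, le_trans hs.2 hτ.2⟩)
    have hWρ : ∀ τ ∈ Set.Icc (0:ℝ) R, β * ρ τ ≤ W (u τ) := by
      intro τ hτ
      have h1 : ρ τ ≤ ν * ‖u τ‖^2 := by
        have := hkey τ hτ
        simp only [hρdef]
        linarith
      have h2 : β * ρ τ ≤ β * (ν * ‖u τ‖^2) := mul_le_mul_of_nonneg_left h1 hβ.le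
      have h3 : β * (ν * ‖u τ‖^2) = m * ‖u τ‖^2 := by
        rw [hβdef]
        field_simp
      rw [h3] at h2
      exact le_trans h2 (hlowW (u τ) (hstay τ hτ))
    set A : ℝ := ∫ τ in (0:ℝ)..R, e τ with hAdef
    set sfun : ℝ → ℝ := fun τ => ∫ s in τ..R, ρ s with hsfundef
    have hsd : ∀ τ, HasDerivAt sfun (-(ρ τ)) τ := by
      intro τ
      have h1 := ((hρc.integral_hasStrictDerivAt R τ).hasDerivAt).neg
      have h2 : (fun τ => -(∫ s in R..τ, ρ s)) = sfun := by
        funext x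
        have h := intervalIntegral.integral_symm (f := ρ) (μ := volume) x R
        simp only [hsfundef]
        rw [h]
        ring
      rw [← h2]
      exact h1
    have hsR : sfun R = 0 := by simp [hsfundef]
    have hA1 : ∀ τ ∈ Set.Icc (0:ℝ) R, c τ + β * sfun τ ≤ A := by
      intro τ hτ
      have hsplit : A = (∫ s in (0:ℝ)..τ, e s) + ∫ s in τ..R, e s := by
        rw [hAdef, intervalIntegral.integral_add_adjacent_intervals
          (hec.intervalIntegrable 0 τ) (hec.intervalIntegrable τ R)]
      have h1 : c τ ≤ ∫ s in (0:ℝ)..τ, e s :=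
        intervalIntegral.integral_mono_on (μ := volume) hτ.1
          (hg₂c.intervalIntegrable 0 τ) (hec.intervalIntegrable 0 τ)
          (fun s _ => hge s)
      have h2 : β * sfun τ ≤ ∫ s in τ..R, e s := by
        rw [hsfundef, ← intervalIntegral.integral_const_mul]
        apply intervalIntegral.integral_mono_on (μ := volume) hτ.2
          ((continuous_const.mul hρc).intervalIntegrable τ R)
          (hec.intervalIntegrable τ R)
        intro s hs
        refine le_trans (hWρ s ⟨le_trans hτ.1 hs.1, hs.2⟩) ?_
        show W (u s) ≤ 1/2 * ‖deriv u s‖^2 + W (u s)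
        nlinarith [sq_nonneg ‖deriv u s‖]
      linarith
    set gdef : ℝ := ρ0 - A with hgdefdef
    by_cases hg : gdef ≤ 0
    · rw [hEdef]
      have : ρ0 ≤ A := by rw [hgdefdef] at hg; linarith
      linarith
    push_neg at hg
    set F : ℝ → ℝ := fun τ => Real.exp (β*τ) * (sfun τ + gdef/β) with hFdef
    have hFd : ∀ τ, HasDerivAt F (Real.exp (β*τ) * β * (sfun τ + gdef/β) + Real.exp (β*τ) * (-(ρ τ))) τ := by
      intro τ
      have h1 : HasDerivAt (fun τ : ℝ => Real.exp (β*τ)) (Real.exp (β*τ) * β) τ := by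
        have := ((hasDerivAt_id τ).const_mul β).exp
        simpa using this
      have h2 := (hsd τ).add_const (gdef/β)
      have := h1.mul h2
      exact this
    have hanti : AntitoneOn F (Set.Icc 0 R) := by
      apply antitoneOn_of_deriv_nonpos (convex_Icc 0 R)
      · have hsdiff : Differentiable ℝ sfun := fun τ => (hsd τ).differentiableAt
        exact ((Real.continuous_exp.comp (continuous_const.mul continuous_id')).mul
          (hsdiff.continuous.add continuous_const)).continuousOn
      · intro x _
        exact ((hFd x).differentiableAt).differentiableWithinAt
      · intro x hx
        rw [interior_Icc] at hx
        rw [(hFd x).deriv]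
        have h3 : gdef + β * sfun x ≤ ρ x := by
          have h := hA1 x ⟨hx.1.le, hx.2.le⟩
          show gdef + β * sfun x ≤ ρ0 - c x
          rw [hgdefdef]
          linarith
        have h4 : Real.exp (β*x) * β * (sfun x + gdef/β) + Real.exp (β*x) * (-(ρ x))
            = Real.exp (β*x) * ((β * sfun x + gdef) - ρ x) := by
          field_simp
          ring
        rw [h4]
        apply mul_nonpos_of_nonneg_of_nonpos (Real.exp_nonneg _)
        linarith
    have hFR : F R = Real.exp (β*R) * (gdef/β) := by rw [hFdef]; simp [hsR]
    have hF0 : F 0 = sfun 0 + gdef/β := by rw [hFdef]; simp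
    have hmono := hanti (Set.left_mem_Icc.mpr hRpos.le) (Set.right_mem_Icc.mpr hRpos.le) hRpos.le
    rw [hFR, hF0] at hmono
    have hs0 : β * sfun 0 ≤ A := by
      have := hA1 0 ⟨le_rfl, hRpos.le⟩
      have hc0 : c 0 = 0 := by simp [hcdef]
      rw [hc0] at this
      linarith
    -- conclude
    have hchain : Real.exp (β*R) * (gdef/β) ≤ ρ0 / β := by
      have h5 : sfun 0 ≤ A / β := by
        rw [le_div_iff₀ hβ]
        linarith [hs0]
      have h6 : A / β + gdef/β = ρ0 / β := by
        rw [hgdefdef]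
        ring
      linarith
    have hfinal : gdef ≤ ρ0 * Real.exp (-β*R) := by
      have hexp : 0 < Real.exp (β*R) := Real.exp_pos _
      have h7 : Real.exp (β*R) * gdef ≤ ρ0 := by
        calc Real.exp (β*R) * gdef = β * (Real.exp (β*R) * (gdef/β)) := by
              field_simp
          _ ≤ β * (ρ0/β) := mul_le_mul_of_nonneg_left hchain hβ.le
          _ = ρ0 := by field_simp
      have h8 : gdef ≤ ρ0 / Real.exp (β*R) := by
        rw [le_div_iff₀ hexp]
        have hcc := mul_comm (Real.exp (β*R)) gdef
        linarith [h7]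
      calc gdef ≤ ρ0 / Real.exp (β*R) := h8
        _ = ρ0 * Real.exp (-β*R) := by rw [neg_mul, Real.exp_neg, div_eq_mul_inv]
    rw [hEdef]
    have h8 : ρ0 * Real.exp (-β*R) ≤ η * Real.exp (-β*R) :=
      mul_le_mul_of_nonneg_right hda (Real.exp_nonneg _)
    rw [hgdefdef] at hfinal
    linarith
  · -- the curve exits the ball: direct energy estimate
    push_neg at hstay
    obtain ⟨τ₀, hτ₀Icc, hτ₀⟩ := hstay
    set S : Set ℝ := Set.Icc 0 R ∩ {τ | r ≤ ‖u τ‖} with hSdef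
    have hSne : S.Nonempty := ⟨τ₀, hτ₀Icc, hτ₀.le⟩
    have hSclosed : IsClosed S := isClosed_Icc.inter (isClosed_le continuous_const hu.continuous.norm)
    have hSbdd : BddBelow S := ⟨0, fun s hs => hs.1.1⟩
    set t₀ : ℝ := sInf S with ht₀def
    have ht₀mem : t₀ ∈ S := hSclosed.csInf_mem hSne hSbdd
    have ht₀Icc : t₀ ∈ Set.Icc (0:ℝ) R := ht₀mem.1
    have ht₀r : r ≤ ‖u t₀‖ := ht₀mem.2
    have ht₀pos : 0 < t₀ := by
      rcases eq_or_lt_of_le ht₀Icc.1 with h | h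
      · exfalso
        have h1 : r ≤ ‖u 0‖ := by rw [h]; exact ht₀r
        nlinarith [norm_nonneg (u 0)]
      · exact h
    have hlt : ∀ s, 0 ≤ s → s < t₀ → ‖u s‖ < r := by
      intro s hs0 hst
      by_contra hcon
      push_neg at hcon
      have : s ∈ S := ⟨⟨hs0, le_trans hst.le ht₀Icc.2⟩, hcon⟩
      exact absurd (csInf_le hSbdd this) (not_le.mpr hst)
    have hballs : ∀ s ∈ Set.Icc 0 t₀, ‖u s‖ ≤ r := by
      intro s hs
      rcases eq_or_lt_of_le hs.2 with h | h
      · rw [h]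
        apply le_of_tendsto ((hu.continuous.norm.continuousAt).continuousWithinAt.tendsto
          (x := t₀) (s := Set.Iio t₀))
        filter_upwards [Ioo_mem_nhdsLT ht₀pos] with z hz
        exact (hlt z hz.1.le hz.2).le
      · exact (hlt s hs.1 h).le
    -- FTC estimate on [0, t₀]
    set φ' : ℝ → ℝ := fun s =>
      2 * ((u s).re * (deriv u s).re + (u s).im * (deriv u s).im) with hφ'def
    have hφ'c : Continuous φ' := by
      apply continuous_const.mul
      exact ((Complex.continuous_re.comp hu.continuous).mul (Complex.continuous_re.comp hudc)).add
        ((Complex.continuous_im.comp hu.continuous).mul (Complex.continuous_im.comp hudc))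
    have hFTC : (∫ s in (0:ℝ)..t₀, φ' s) = ‖u t₀‖^2 - ‖u 0‖^2 :=
      intervalIntegral.integral_eq_sub_of_hasDerivAt
        (fun s _ => hasDerivAt_norm_sq ((hu.differentiable one_ne_zero s).hasDerivAt))
        (hφ'c.intervalIntegrable 0 t₀)
    have hpoint : ∀ s ∈ Set.Icc 0 t₀, km / 2 * φ' s ≤ g₂ s := by
      intro s hs
      have h2 : ‖u s‖ ≤ r := hballs s hs
      have h3 := sqrt_quad_lower hm (hlowW (u s) h2)
      have h4 := real_inner_le (u s) (deriv u s)
      have h5 : km / 2 * φ' s ≤ km * (‖u s‖ * ‖deriv u s‖) := by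
        rw [hφ'def]
        have h6 : km / 2 * (2 * ((u s).re * (deriv u s).re + (u s).im * (deriv u s).im))
            = km * ((u s).re * (deriv u s).re + (u s).im * (deriv u s).im) := by ring
        rw [h6]
        exact mul_le_mul_of_nonneg_left h4 hkm.le
      calc km / 2 * φ' s ≤ km * (‖u s‖ * ‖deriv u s‖) := h5
        _ = (km * ‖u s‖) * ‖deriv u s‖ := by ring
        _ ≤ (Real.sqrt 2 * Real.sqrt (W (u s))) * ‖deriv u s‖ :=
            mul_le_mul_of_nonneg_right h3 (norm_nonneg _)
    have hmono : (∫ s in (0:ℝ)..t₀, km / 2 * φ' s) ≤ ∫ s in (0:ℝ)..t₀, g₂ s :=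
      intervalIntegral.integral_mono_on (μ := volume) ht₀Icc.1
        ((continuous_const.mul hφ'c).intervalIntegrable 0 t₀)
        (hg₂c.intervalIntegrable 0 t₀) hpoint
    have hval : (∫ s in (0:ℝ)..t₀, km / 2 * φ' s) = km/2 * (‖u t₀‖^2 - ‖u 0‖^2) := by
      rw [intervalIntegral.integral_const_mul, hFTC]
    have hge2 : (∫ s in (0:ℝ)..t₀, g₂ s) ≤ ∫ s in (0:ℝ)..t₀, e s :=
      intervalIntegral.integral_mono_on (μ := volume) ht₀Icc.1
        (hg₂c.intervalIntegrable 0 t₀) (hec.intervalIntegrable 0 t₀)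
        (fun s _ => hge s)
    have hsplitE : (∫ s in (0:ℝ)..t₀, e s) ≤ ∫ s in (0:ℝ)..R, e s := by
      rw [← intervalIntegral.integral_add_adjacent_intervals
        (hec.intervalIntegrable 0 t₀) (hec.intervalIntegrable t₀ R)]
      have : 0 ≤ ∫ s in t₀..R, e s :=
        intervalIntegral.integral_nonneg ht₀Icc.2 (fun s _ => henn s)
      linarith
    have hett : km/2 * (‖u t₀‖^2 - ‖u 0‖^2) ≥ km/2 * (r^2 - r^2/4) := by
      have h9 : r^2 ≤ ‖u t₀‖^2 := by nlinarith [norm_nonneg (u t₀)]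
      nlinarith
    rw [hEdef]
    have hηbound : η ≤ ∫ s in (0:ℝ)..R, e s := by
      have : km/2 * (r^2 - r^2/4) = 3 * η := by rw [hηdef]; ring
      nlinarith [hmono, hval, hge2, hsplitE, hett]
    have : ρ0 ≤ η := hda
    nlinarith [hCexp]
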